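/- Let d ≥ 3 and let V ≥ 0 be a function in L¹_loc(ℝ^d). Suppose that for some r₀ > 0 and some function γ with γ(r) ∈ (0, 1) for all r ∈ (0, r₀) and limsup_{r↓0} r^{−2} γ(r) = ∞, the condition lim_{|y|→∞} V⋆(γ(r)·mes_d(Q_r(y)); Q_r(y)) = ∞ holds for every r ∈ (0, r₀]. Then for every r ∈ (0, r₀] one also has lim_{|y|→∞} (Y⋆)⋆(γ(r)·mes_d(Q_r(y)); Q_r(y)) = ∞, where Y(x, s) := √(V(x)) · |x − s|^{2−d} · √(V(s)). -/

import Mathlib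

open MeasureTheory Filter

/-- The nonincreasing rearrangement of a nonnegative function `f` with respect to a
measure `μ`: `f⋆(t; X; μ) := sup {s > 0 : μ {x : f x ≥ s} ≥ t}`, with `sup ∅ = 0`. -/
noncomputable def rearr {X : Type*} [MeasurableSpace X] (μ : Measure X)
    (f : X → ℝ) (t : ℝ) : ℝ :=
  sSup {s : ℝ | 0 < s ∧ ENNReal.ofReal t ≤ μ {x | s ≤ f x}}

/-- The closed cube `Q_r(y) = y + [-r, r]^d` of side `2r` centered at `y`. -/
def cube {d : ℕ} (r : ℝ) (y : EuclideanSpace ℝ (Fin d)) : Set (EuclideanSpace ℝ (Fin d)) :=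
  {x | ∀ i, |x i - y i| ≤ r}

open Set

lemma rearr_nonneg {X : Type*} [MeasurableSpace X] (μ : Measure X) (f : X → ℝ) (t : ℝ) :
    0 ≤ rearr μ f t :=
  Real.sSup_nonneg (fun _ hx => hx.1.le)

lemma bddAbove_rearr_set {X : Type*} [MeasurableSpace X] (μ : Measure X) [IsFiniteMeasure μ]
    (f : X → ℝ) (hf : ∀ n : ℕ, MeasurableSet {x | (n:ℝ) ≤ f x}) {t : ℝ} (ht : 0 < t) :
    BddAbove {s : ℝ | 0 < s ∧ ENNReal.ofReal t ≤ μ {x | s ≤ f x}} := by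
  have hanti : Antitone (fun n : ℕ => {x | (n:ℝ) ≤ f x}) := by
    intro m n hmn x hx
    exact le_trans (show (m:ℝ) ≤ (n:ℝ) by exact_mod_cast hmn) hx
  have hempty : ⋂ n : ℕ, {x | (n:ℝ) ≤ f x} = ∅ := by
    ext x
    simp only [mem_iInter, mem_empty_iff_false, iff_false, not_forall, mem_setOf_eq, not_le]
    obtain ⟨n, hn⟩ := exists_nat_gt (f x)
    exact ⟨n, hn⟩
  have htend := tendsto_measure_iInter_atTop
    (fun n => (hf n).nullMeasurableSet) hanti ⟨0, measure_ne_top μ _⟩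
  rw [hempty, measure_empty] at htend
  have h2 : ∀ᶠ n : ℕ in atTop, μ {x | (n:ℝ) ≤ f x} < ENNReal.ofReal t :=
    htend.eventually_lt_const (ENNReal.ofReal_pos.mpr ht)
  obtain ⟨n, hn⟩ := h2.exists
  refine ⟨n, fun s hs => ?_⟩
  by_contra h
  push_neg at h
  exact absurd (hs.2.trans (measure_mono (fun x hx => le_trans (le_of_lt h) hx)))
    (not_le.mpr hn)

lemma le_rearr {X : Type*} [MeasurableSpace X] {μ : Measure X} {f : X → ℝ} {t s : ℝ}
    (hb : BddAbove {s : ℝ | 0 < s ∧ ENNReal.ofReal t ≤ μ {x | s ≤ f x}})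
    (hs : 0 < s) (h : ENNReal.ofReal t ≤ μ {x | s ≤ f x}) : s ≤ rearr μ f t :=
  le_csSup hb ⟨hs, h⟩

lemma rearr_superlevel_mem {X : Type*} [MeasurableSpace X] (μ : Measure X) [IsFiniteMeasure μ]
    (f : X → ℝ) (hf : Measurable f) {t β : ℝ} (ht : 0 < t) (hβ : 0 < β) :
    β ≤ rearr μ f t ↔
      ∀ q : ℚ, 0 < (q:ℝ) → (q:ℝ) < β → ENNReal.ofReal t ≤ μ {x | (q:ℝ) ≤ f x} := by
  have hml : ∀ n : ℕ, MeasurableSet {x | (n:ℝ) ≤ f x} := fun n => hf measurableSet_Ici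
  have hbdd := bddAbove_rearr_set μ f hml ht
  constructor
  · intro h q hq1 hq2
    have hSne : {e : ℝ | 0 < e ∧ ENNReal.ofReal t ≤ μ {x | e ≤ f x}}.Nonempty := by
      by_contra hne
      rw [not_nonempty_iff_eq_empty] at hne
      have : rearr μ f t = 0 := by rw [rearr, hne, Real.sSup_empty]
      linarith
    obtain ⟨e, he, hqe⟩ := exists_lt_of_lt_csSup hSne (lt_of_lt_of_le hq2 h)
    exact he.2.trans (measure_mono (fun x hx => le_trans hqe.le hx))
  · intro h
    by_contra hlt
    push_neg at hlt
    obtain ⟨q, hq1, hq2⟩ := exists_rat_btwn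
      (show max (rearr μ f t) 0 < β from max_lt hlt hβ)
    have hq0 : 0 < (q:ℝ) := (le_max_right _ 0).trans_lt hq1
    have hle : (q:ℝ) ≤ rearr μ f t := le_csSup hbdd ⟨hq0, h q hq0 hq2⟩
    exact absurd hle (not_le.mpr ((le_max_left _ 0).trans_lt hq1))

lemma norm_le_sqrt_card {d : ℕ} (z : EuclideanSpace ℝ (Fin d)) (R : ℝ) (hR : 0 ≤ R)
    (h : ∀ i, |z i| ≤ R) : ‖z‖ ≤ Real.sqrt d * R := by
  rw [EuclideanSpace.norm_eq]
  have hsum : ∑ i, ‖z i‖ ^ 2 ≤ (d : ℝ) * R ^ 2 := by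
    calc ∑ i, ‖z i‖ ^ 2 ≤ ∑ _i : Fin d, R ^ 2 := Finset.sum_le_sum (fun i _ => by
          have hi := h i
          have : ‖z i‖ = |z i| := Real.norm_eq_abs _
          nlinarith [abs_nonneg (z i)])
      _ = (d : ℝ) * R ^ 2 := by simp [Finset.sum_const, Finset.card_univ, nsmul_eq_mul]
  calc Real.sqrt (∑ i, ‖z i‖ ^ 2) ≤ Real.sqrt ((d:ℝ) * R ^ 2) := Real.sqrt_le_sqrt hsum
    _ = Real.sqrt d * R := by
        rw [Real.sqrt_mul (Nat.cast_nonneg d), Real.sqrt_sq hR]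

lemma coord_le_norm {d : ℕ} (z : EuclideanSpace ℝ (Fin d)) (i : Fin d) : |z i| ≤ ‖z‖ := by
  rw [EuclideanSpace.norm_eq, ← Real.sqrt_sq_eq_abs]
  apply Real.sqrt_le_sqrt
  have : z i ^ 2 = ‖z i‖ ^ 2 := by rw [Real.norm_eq_abs, sq_abs]
  rw [this]
  exact Finset.single_le_sum (fun j _ => sq_nonneg ‖z j‖) (Finset.mem_univ i)

lemma measurableSet_cube {d : ℕ} (r : ℝ) (y : EuclideanSpace ℝ (Fin d)) :
    MeasurableSet (cube r y) := by
  have : cube r y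
      = ⋂ i, (fun x : EuclideanSpace ℝ (Fin d) => x i) ⁻¹' (Icc (y i - r) (y i + r)) := by
    ext x
    simp only [cube, mem_setOf_eq, mem_iInter, mem_preimage, mem_Icc, abs_sub_le_iff]
    constructor
    · intro h i; constructor <;> linarith [(h i).1, (h i).2]
    · intro h i; constructor <;> linarith [(h i).1, (h i).2]
  rw [this]
  exact MeasurableSet.iInter fun i => measurableSet_Icc.preimage
    (EuclideanSpace.proj (𝕜 := ℝ) i).continuous.measurable

lemma volume_cube_pos {d : ℕ} {r : ℝ} (hr : 0 < r) (y : EuclideanSpace ℝ (Fin d)) :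
    0 < volume (cube r y) := by
  refine lt_of_lt_of_le (Metric.measure_ball_pos volume y hr) (measure_mono ?_)
  intro x hx i
  have h1 : |(x - y) i| ≤ ‖x - y‖ := coord_le_norm _ i
  have h2 : ‖x - y‖ < r := by rwa [Metric.mem_ball, dist_eq_norm] at hx
  have h3 : (x - y) i = x i - y i := by simp
  rw [h3] at h1
  linarith

lemma volume_cube_lt_top {d : ℕ} {r : ℝ} (hr : 0 < r) (y : EuclideanSpace ℝ (Fin d)) :
    volume (cube r y) < ⊤ := by
  refine lt_of_le_of_lt
    (measure_mono (show cube r y ⊆ Metric.closedBall y (Real.sqrt d * r) from ?_))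
    measure_closedBall_lt_top
  intro x hx
  rw [Metric.mem_closedBall, dist_eq_norm]
  refine norm_le_sqrt_card _ r hr.le (fun i => ?_)
  have h3 : (x - y) i = x i - y i := by simp
  rw [h3]; exact hx i

lemma volume_cube_const {d : ℕ} (r : ℝ) (y : EuclideanSpace ℝ (Fin d)) :
    volume (cube r y) = volume (cube r (0 : EuclideanSpace ℝ (Fin d))) := by
  have hset : cube r y = (fun x : EuclideanSpace ℝ (Fin d) => -y + x) ⁻¹' (cube r 0) := by
    ext x
    simp only [cube, mem_setOf_eq, mem_preimage]
    constructor
    · intro h i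
      have h3 : (-y + x) i = x i - y i := by simp; ring
      rw [h3]; simpa using h i
    · intro h i
      have h3 : (-y + x) i = x i - y i := by simp; ring
      have := h i; rw [h3] at this; simpa using this
  rw [hset, measure_preimage_add]

theorem stmt16 {d : ℕ} (hd : 3 ≤ d)
    (V : EuclideanSpace ℝ (Fin d) → ℝ) (hVmeas : Measurable V) (hV0 : ∀ x, 0 ≤ V x)
    (hVloc : LocallyIntegrable V)
    (r₀ : ℝ) (hr₀ : 0 < r₀) (γ : ℝ → ℝ)
    (hγ : ∀ r ∈ Set.Ioo (0 : ℝ) r₀, γ r ∈ Set.Ioo (0 : ℝ) 1)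
    (hγlim : ∀ M : ℝ, ∃ᶠ r in nhdsWithin 0 (Set.Ioi 0), M ≤ γ r / r ^ 2)
    (hmain : ∀ r : ℝ, 0 < r → r ≤ r₀ →
      Tendsto (fun y : EuclideanSpace ℝ (Fin d) =>
          rearr (volume.restrict (cube r y)) V (γ r * (volume (cube r y)).toReal))
        (comap (fun y : EuclideanSpace ℝ (Fin d) => ‖y‖) atTop) atTop) :
    ∀ r : ℝ, 0 < r → r ≤ r₀ →
      Tendsto (fun y : EuclideanSpace ℝ (Fin d) =>
          rearr (volume.restrict (cube r y))
            (fun s => rearr (volume.restrict (cube r y))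
              (fun x => Real.sqrt (V x) * ‖x - s‖ ^ ((2 : ℝ) - d) * Real.sqrt (V s))
              (γ r * (volume (cube r y)).toReal))
            (γ r * (volume (cube r y)).toReal))
        (comap (fun y : EuclideanSpace ℝ (Fin d) => ‖y‖) atTop) atTop := by
  intro r hr hrle
  haveI hnt : Nontrivial (EuclideanSpace ℝ (Fin d)) := by
    refine ⟨⟨EuclideanSpace.single (⟨0, by omega⟩ : Fin d) (1:ℝ), 0, fun h => ?_⟩⟩
    have := congrArg norm h
    rw [EuclideanSpace.norm_single] at this
    simp at this
  have hmain' := hmain r hr hrle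
  simp only [volume_cube_const r] at hmain' ⊢
  set t := γ r * (volume (cube r (0 : EuclideanSpace ℝ (Fin d)))).toReal with ht
  have hne : NeBot (comap (fun y : EuclideanSpace ℝ (Fin d) => ‖y‖) atTop) := by
    apply Filter.comap_neBot
    intro s hs
    obtain ⟨a, ha⟩ := mem_atTop_sets.mp hs
    refine ⟨(max a 0) • EuclideanSpace.single (⟨0, by omega⟩ : Fin d) (1:ℝ), ha _ ?_⟩
    rw [norm_smul, EuclideanSpace.norm_single]
    simp only [norm_one, mul_one, Real.norm_eq_abs, abs_of_nonneg (le_max_right a 0)]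
    exact le_max_left a 0
  haveI hfinM : ∀ y : EuclideanSpace ℝ (Fin d),
      IsFiniteMeasure (volume.restrict (cube r y)) := fun y =>
    ⟨by rw [Measure.restrict_apply_univ]; exact volume_cube_lt_top hr y⟩
  rcases le_or_gt t 0 with htneg | htpos
  · exfalso
    have hzero : ∀ y : EuclideanSpace ℝ (Fin d),
        rearr (volume.restrict (cube r y)) V t = 0 := by
      intro y
      have hset : {s : ℝ | 0 < s ∧
          ENNReal.ofReal t ≤ (volume.restrict (cube r y)) {x | s ≤ V x}} = Set.Ioi 0 := by
        ext s
        simp [ENNReal.ofReal_of_nonpos htneg]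
      rw [rearr, hset, Real.sSup_of_not_bddAbove (not_bddAbove_Ioi (0:ℝ))]
    simp only [hzero] at hmain'
    obtain ⟨y, hy⟩ := (hmain'.eventually (eventually_ge_atTop 1)).exists
    linarith
  · -- main case
    set c := (Real.sqrt d * (2*r)) ^ ((2:ℝ) - d) with hc
    have hsd : (0:ℝ) < Real.sqrt d * (2*r) := by
      have : (0:ℝ) < Real.sqrt d := Real.sqrt_pos.mpr (by positivity)
      positivity
    have hcpos : 0 < c := Real.rpow_pos_of_pos hsd _
    have hYm : ∀ s : EuclideanSpace ℝ (Fin d), Measurable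
        (fun x : EuclideanSpace ℝ (Fin d) =>
          Real.sqrt (V x) * ‖x - s‖ ^ ((2:ℝ) - d) * Real.sqrt (V s)) := fun s =>
      (hVmeas.sqrt.mul
        (((continuous_id.sub continuous_const).norm.measurable).pow measurable_const)).mul
        measurable_const
    have hYjoint : Measurable
        (fun p : EuclideanSpace ℝ (Fin d) × EuclideanSpace ℝ (Fin d) =>
          Real.sqrt (V p.1) * ‖p.1 - p.2‖ ^ ((2:ℝ) - d) * Real.sqrt (V p.2)) :=
      ((hVmeas.comp measurable_fst).sqrt.mul
        (((continuous_fst.sub continuous_snd).norm.measurable).pow measurable_const)).mul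
        (hVmeas.comp measurable_snd).sqrt
    have hkey : ∀ y : EuclideanSpace ℝ (Fin d),
        c * rearr (volume.restrict (cube r y)) V t ≤
          rearr (volume.restrict (cube r y))
            (fun s => rearr (volume.restrict (cube r y))
              (fun x => Real.sqrt (V x) * ‖x - s‖ ^ ((2 : ℝ) - d) * Real.sqrt (V s)) t) t := by
      intro y
      set μy := volume.restrict (cube r y) with hμy
      set g : EuclideanSpace ℝ (Fin d) → ℝ := fun s => rearr μy
        (fun x => Real.sqrt (V x) * ‖x - s‖ ^ ((2 : ℝ) - d) * Real.sqrt (V s)) t with hg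
      -- superlevel sets of g are measurable
      have hGml : ∀ n : ℕ, MeasurableSet {s | (n:ℝ) ≤ g s} := by
        intro n
        rcases Nat.eq_zero_or_pos n with h0 | hn
        · have : {s | (n:ℝ) ≤ g s} = Set.univ := by
            ext s
            simp only [h0, Nat.cast_zero, mem_setOf_eq, mem_univ, iff_true]
            exact rearr_nonneg _ _ _
          rw [this]; exact MeasurableSet.univ
        · have hn' : (0:ℝ) < n := by exact_mod_cast hn
          have heq : {s | (n:ℝ) ≤ g s} = ⋂ (q : ℚ), ⋂ (_ : 0 < (q:ℝ)), ⋂ (_ : (q:ℝ) < n),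
              {s : EuclideanSpace ℝ (Fin d) | ENNReal.ofReal t ≤
                μy {x | (q:ℝ) ≤ Real.sqrt (V x) * ‖x - s‖ ^ ((2 : ℝ) - d) * Real.sqrt (V s)}} := by
            ext s
            simp only [mem_setOf_eq, mem_iInter, hg]
            exact rearr_superlevel_mem μy _ (hYm s) htpos hn'
          rw [heq]
          refine MeasurableSet.iInter fun q => MeasurableSet.iInter fun hq1 =>
            MeasurableSet.iInter fun hq2 => ?_
          have hA : MeasurableSet {p : EuclideanSpace ℝ (Fin d) × EuclideanSpace ℝ (Fin d) |
              (q:ℝ) ≤ Real.sqrt (V p.1) * ‖p.1 - p.2‖ ^ ((2:ℝ) - d) * Real.sqrt (V p.2)} :=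
            hYjoint measurableSet_Ici
          have hF : Measurable fun s : EuclideanSpace ℝ (Fin d) =>
              μy {x | (q:ℝ) ≤ Real.sqrt (V x) * ‖x - s‖ ^ ((2 : ℝ) - d) * Real.sqrt (V s)} :=
            measurable_measure_prodMk_right hA
          exact measurableSet_le measurable_const hF
      have hSG : BddAbove {β : ℝ | 0 < β ∧ ENNReal.ofReal t ≤ μy {s | β ≤ g s}} :=
        bddAbove_rearr_set μy g hGml htpos
      have hG0 : 0 ≤ rearr μy g t := rearr_nonneg μy g t
      -- key step : every element of the V-set gives a lower bound
      have hstep : ∀ α : ℝ, 0 < α → ENNReal.ofReal t ≤ μy {x | α ≤ V x} →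
          c * α ≤ rearr μy g t := by
        intro α hα0 hαμ
        apply le_rearr hSG (mul_pos hcpos hα0)
        refine le_trans hαμ ?_
        rw [Measure.restrict_apply' (measurableSet_cube r y),
          Measure.restrict_apply' (measurableSet_cube r y)]
        apply measure_mono
        rintro s ⟨hs1, hs2⟩
        refine ⟨?_, hs2⟩
        -- show c * α ≤ g s for s ∈ cube with α ≤ V s
        show c * α ≤ g s
        apply le_rearr (bddAbove_rearr_set μy _ (fun n => (hYm s) measurableSet_Ici) htpos)
          (mul_pos hcpos hα0)
        refine le_trans hαμ ?_
        rw [Measure.restrict_apply' (measurableSet_cube r y),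
          Measure.restrict_apply' (measurableSet_cube r y)]
        have hincl : {x | α ≤ V x} ∩ cube r y ⊆
            ({x | c * α ≤ Real.sqrt (V x) * ‖x - s‖ ^ ((2 : ℝ) - d) * Real.sqrt (V s)}
              ∩ cube r y) ∪ {s} := by
          rintro x ⟨hx1, hx2⟩
          rcases eq_or_ne x s with hxeq | hxne
          · exact Or.inr (by simp [hxeq])
          refine Or.inl ⟨?_, hx2⟩
          show c * α ≤ Real.sqrt (V x) * ‖x - s‖ ^ ((2 : ℝ) - d) * Real.sqrt (V s)
          have hxs : ‖x - s‖ ≤ Real.sqrt d * (2*r) := by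
            refine norm_le_sqrt_card _ _ (by linarith) (fun i => ?_)
            have h3 : (x - s) i = x i - s i := by simp
            rw [h3]
            have h4 : |x i - s i| ≤ |x i - y i| + |y i - s i| := abs_sub_le _ _ _
            have h5 : |y i - s i| = |s i - y i| := abs_sub_comm _ _
            have h6 := hx2 i
            have h7 := hs2 i
            rw [h5] at h4
            linarith
          have hxs0 : 0 < ‖x - s‖ := norm_pos_iff.mpr (sub_ne_zero.mpr hxne)
          have hrp : c ≤ ‖x - s‖ ^ ((2:ℝ) - d) := by
            rw [hc]
            refine Real.rpow_le_rpow_of_nonpos hxs0 hxs ?_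
            have : (3:ℝ) ≤ (d:ℝ) := by exact_mod_cast hd
            linarith
          have hsq1 : Real.sqrt α ≤ Real.sqrt (V x) := Real.sqrt_le_sqrt hx1
          have hsq2 : Real.sqrt α ≤ Real.sqrt (V s) := Real.sqrt_le_sqrt hs1
          have heqca : c * α = Real.sqrt α * c * Real.sqrt α := by
            rw [mul_comm (Real.sqrt α) c, mul_assoc, Real.mul_self_sqrt hα0.le]
          rw [heqca]
          have hsn : 0 ≤ Real.sqrt α := Real.sqrt_nonneg _
          have hpn : 0 ≤ Real.sqrt (V x) * ‖x - s‖ ^ ((2:ℝ) - d) := by positivity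
          exact mul_le_mul (mul_le_mul hsq1 hrp hcpos.le (Real.sqrt_nonneg _)) hsq2 hsn hpn
        calc volume ({x | α ≤ V x} ∩ cube r y)
            ≤ volume (({x | c * α ≤ Real.sqrt (V x) * ‖x - s‖ ^ ((2 : ℝ) - d) * Real.sqrt (V s)}
                ∩ cube r y) ∪ {s}) := measure_mono hincl
          _ ≤ volume ({x | c * α ≤ Real.sqrt (V x) * ‖x - s‖ ^ ((2 : ℝ) - d) * Real.sqrt (V s)}
                ∩ cube r y) + volume ({s} : Set (EuclideanSpace ℝ (Fin d))) :=
              measure_union_le _ _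
          _ = volume ({x | c * α ≤ Real.sqrt (V x) * ‖x - s‖ ^ ((2 : ℝ) - d) * Real.sqrt (V s)}
                ∩ cube r y) := by rw [measure_singleton, add_zero]
      -- conclude
      have hsup : rearr μy V t ≤ rearr μy g t / c := by
        refine Real.sSup_le (fun α hα => ?_) (div_nonneg hG0 hcpos.le)
        rw [le_div_iff₀ hcpos, mul_comm]
        exact hstep α hα.1 hα.2
      calc c * rearr μy V t ≤ c * (rearr μy g t / c) := by
            exact mul_le_mul_of_nonneg_left hsup hcpos.le
        _ = rearr μy g t := by field_simp
    exact tendsto_atTop_mono hkey ((tendsto_const_mul_atTop_of_pos hcpos).mpr hmain')
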